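/- Let π ∈ (S_n)^p, and assume π is normalized so that the identity attains the minimum in err(π, π*) where π* = (id,…,id). Let C_j = {u : π_j(u) ≠ u}, B = B(π), B^* = B(π*). Then the number of nonzero entries of B − B^* is at most C·p·‖B^* − B^*B‖₁ for an absolute constant C, and consequently ‖B − B^*‖_F ≤ C'·√(‖B^* − B^*B‖₁ / p) and ‖B − B^*‖_op ≤ 2. -/

import Mathlib

open Finset

/-- The set of edges of the complete graph on `Fin n`. -/
abbrev GraphEdge (n : ℕ) := {e : Sym2 (Fin n) // ¬ e.IsDiag}

/-- The edge permutation `Π` induced by a node permutation `π`. -/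
def edgeMap {n : ℕ} (σ : Equiv.Perm (Fin n)) (e : GraphEdge n) : GraphEdge n :=
  ⟨Sym2.map σ e.1, fun h => e.2 ((Sym2.isDiag_map σ.injective).mp h)⟩

/-- The normalized edge alignment matrix `B(π)` of a `p`-tuple of permutations. -/
noncomputable def Bmat {n p : ℕ} (π : Fin p → Equiv.Perm (Fin n)) :
    Matrix (Fin p × GraphEdge n) (Fin p × GraphEdge n) ℝ :=
  fun x y => (p : ℝ)⁻¹ * (if edgeMap (π x.1) x.2 = edgeMap (π y.1) y.2 then 1 else 0)

/-- Entrywise ℓ¹ norm of a matrix. -/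
noncomputable def l1Norm {ι κ : Type*} [Fintype ι] [Fintype κ]
    (M : Matrix ι κ ℝ) : ℝ := ∑ i, ∑ j, |M i j|

/-- Frobenius norm of a matrix. -/
noncomputable def frobNorm {ι κ : Type*} [Fintype ι] [Fintype κ]
    (M : Matrix ι κ ℝ) : ℝ := Real.sqrt (∑ i, ∑ j, (M i j) ^ 2)

/-- Operator (spectral) norm of a square matrix. -/
noncomputable def opNorm {ι : Type*} [Fintype ι] [DecidableEq ι]
    (M : Matrix ι ι ℝ) : ℝ := ‖Matrix.toEuclideanCLM (𝕜 := ℝ) M‖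

/-- Number of mismatched (vertex, graph) pairs of a tuple of permutations w.r.t. identity. -/
def mismatches {n p : ℕ} (π : Fin p → Equiv.Perm (Fin n)) : ℕ :=
  ∑ j : Fin p, (Finset.univ.filter (fun u : Fin n => π j u ≠ u)).card

lemma edgeMap_one {n : ℕ} (e : GraphEdge n) : edgeMap 1 e = e := by
  simp [edgeMap, Sym2.map_id']

lemma edgeMap_mul {n : ℕ} (σ τ : Equiv.Perm (Fin n)) (e : GraphEdge n) :
    edgeMap (σ * τ) e = edgeMap σ (edgeMap τ e) := by
  simp [edgeMap, Sym2.map_map]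

/-- `edgeMap` as a permutation of edges. -/
def edgePerm {n : ℕ} (σ : Equiv.Perm (Fin n)) : Equiv.Perm (GraphEdge n) where
  toFun := edgeMap σ
  invFun := edgeMap σ⁻¹
  left_inv e := by rw [← edgeMap_mul]; simp [edgeMap_one]
  right_inv e := by rw [← edgeMap_mul]; simp [edgeMap_one]

@[simp] lemma edgePerm_apply {n : ℕ} (σ : Equiv.Perm (Fin n)) (e : GraphEdge n) :
    edgePerm σ e = edgeMap σ e := rfl

lemma edgeMap_inv_cancel {n : ℕ} (σ : Equiv.Perm (Fin n)) (e : GraphEdge n) :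
    edgeMap σ (edgeMap σ⁻¹ e) = e := by
  rw [← edgeMap_mul]; simp [edgeMap_one]

lemma edgeMap_inv_cancel' {n : ℕ} (σ : Equiv.Perm (Fin n)) (e : GraphEdge n) :
    edgeMap σ⁻¹ (edgeMap σ e) = e := by
  rw [← edgeMap_mul]; simp [edgeMap_one]

lemma Bmat_idem {n p : ℕ} (hp : 1 ≤ p) (π : Fin p → Equiv.Perm (Fin n)) :
    Bmat π * Bmat π = Bmat π := by
  have hp0 : (p : ℝ) ≠ 0 := Nat.cast_ne_zero.mpr (by omega)
  ext x y
  rw [Matrix.mul_apply]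
  rw [Fintype.sum_prod_type]
  have h1 : ∀ k : Fin p,
      ∑ f : GraphEdge n, Bmat π x (k, f) * Bmat π (k, f) y
        = (p:ℝ)⁻¹ * (p:ℝ)⁻¹ *
          (if edgeMap (π x.1) x.2 = edgeMap (π y.1) y.2 then 1 else 0) := by
    intro k
    rw [← Equiv.sum_comp (edgePerm (π k)).symm
      (fun f => Bmat π x (k, f) * Bmat π (k, f) y)]
    have : ∀ g : GraphEdge n, Bmat π x (k, (edgePerm (π k)).symm g) *
        Bmat π (k, (edgePerm (π k)).symm g) y
        = (p:ℝ)⁻¹ * (p:ℝ)⁻¹ * ((if edgeMap (π x.1) x.2 = g then 1 else 0) *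
            (if g = edgeMap (π y.1) y.2 then 1 else 0)) := by
      intro g
      have hg : edgeMap (π k) ((edgePerm (π k)).symm g) = g := by
        exact (edgePerm (π k)).apply_symm_apply g
      simp only [Bmat, hg]
      ring
    simp_rw [this]
    rw [← Finset.mul_sum]
    congr 1
    simp [Finset.sum_ite_eq]
  simp_rw [h1]
  rw [Finset.sum_const, Finset.card_univ, Fintype.card_fin]
  simp only [Bmat]
  rw [nsmul_eq_mul, ← mul_assoc, ← mul_assoc, mul_inv_cancel₀ hp0, one_mul]

lemma Bmat_herm {n p : ℕ} (π : Fin p → Equiv.Perm (Fin n)) :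
    (Bmat π).conjTranspose = Bmat π := by
  ext x y
  simp only [Matrix.conjTranspose_apply, Bmat, star_mul', star_inv₀]
  by_cases h : edgeMap (π x.1) x.2 = edgeMap (π y.1) y.2
  · rw [if_pos h, if_pos h.symm]; norm_num
  · rw [if_neg h, if_neg (fun hh => h hh.symm)]; norm_num

lemma Bmat_opNorm_le {n p : ℕ} (hp : 1 ≤ p) (π : Fin p → Equiv.Perm (Fin n)) :
    opNorm (Bmat π) ≤ 1 := by
  set T := Matrix.toEuclideanCLM (𝕜 := ℝ) (Bmat π) with hT
  have hstar : star T = T := by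
    rw [hT, ← map_star, Matrix.star_eq_conjTranspose, Bmat_herm]
  have hmul : T * T = T := by
    rw [hT, ← map_mul, Bmat_idem hp]
  have h : ‖T‖ * ‖T‖ = ‖T‖ := by
    rw [← CStarRing.norm_star_mul_self (x := T), hstar, hmul]
  show ‖T‖ ≤ 1
  nlinarith [norm_nonneg T]

lemma opNorm_sub_le {n p : ℕ} (hp : 1 ≤ p) (π π' : Fin p → Equiv.Perm (Fin n)) :
    opNorm (Bmat π - Bmat π') ≤ 2 := by
  unfold opNorm
  rw [map_sub]
  calc ‖Matrix.toEuclideanCLM (𝕜 := ℝ) (Bmat π) - Matrix.toEuclideanCLM (𝕜 := ℝ) (Bmat π')‖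
      ≤ ‖Matrix.toEuclideanCLM (𝕜 := ℝ) (Bmat π)‖ + ‖Matrix.toEuclideanCLM (𝕜 := ℝ) (Bmat π')‖ :=
        norm_sub_le _ _
    _ ≤ 1 + 1 := add_le_add (Bmat_opNorm_le hp π) (Bmat_opNorm_le hp π')
    _ = 2 := by norm_num

lemma edge_vertex_count {n : ℕ} (σ : Equiv.Perm (Fin n)) :
    (n - 2) * (Finset.univ.filter (fun u : Fin n => σ u ≠ u)).card ≤
      2 * (Finset.univ.filter (fun e : GraphEdge n => edgeMap σ e ≠ e)).card := by
  classical
  set S := Finset.univ.filter (fun u : Fin n => σ u ≠ u) with hS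
  set ME := Finset.univ.filter (fun e : GraphEdge n => edgeMap σ e ≠ e) with hME
  set P : Finset ((_ : Fin n) × Fin n) := S.sigma (fun u => Finset.univ \ {u, σ u}) with hP
  have hPcard : P.card = S.card * (n - 2) := by
    rw [hP, Finset.card_sigma]
    have : ∀ u ∈ S, (Finset.univ \ ({u, σ u} : Finset (Fin n))).card = n - 2 := by
      intro u hu
      rw [Finset.card_sdiff_of_subset (Finset.subset_univ _), Finset.card_univ, Fintype.card_fin]
      have hu' : σ u ≠ u := (Finset.mem_filter.mp hu).2
      rw [Finset.card_insert_of_notMem (by simp [Ne.symm hu']), Finset.card_singleton]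
    rw [Finset.sum_congr rfl this, Finset.sum_const, smul_eq_mul]
  set f : (Σ _ : Fin n, Fin n) → Sym2 (Fin n) := fun x => s(x.1, x.2) with hf
  have hfiber : ∀ b ∈ P.image f, (P.filter (fun x => f x = b)).card ≤ 2 := by
    intro b hb
    obtain ⟨a, _, ha⟩ := Finset.mem_image.mp hb
    have hsub : P.filter (fun x => f x = b) ⊆ {⟨a.1, a.2⟩, ⟨a.2, a.1⟩} := by
      intro x hx
      have hxb : f x = b := (Finset.mem_filter.mp hx).2
      rw [← ha] at hxb
      rw [hf] at hxb
      simp only at hxb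
      rcases Sym2.eq_iff.mp hxb with ⟨h1, h2⟩ | ⟨h1, h2⟩
      · simp [Finset.mem_insert]
        left
        cases x; cases a; simp_all
      · simp [Finset.mem_insert]
        right
        cases x; cases a; simp_all
    calc (P.filter (fun x => f x = b)).card ≤ _ := Finset.card_le_card hsub
      _ ≤ 2 := by
        apply le_trans (Finset.card_insert_le _ _)
        simp
  have h1 : P.card ≤ 2 * (P.image f).card := Finset.card_le_mul_card_image P 2 hfiber
  have h2 : P.image f ⊆ ME.image Subtype.val := by
    intro b hb
    obtain ⟨a, haP, hab⟩ := Finset.mem_image.mp hb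
    obtain ⟨u, v⟩ := a
    have huv := Finset.mem_sigma.mp haP
    have hu : σ u ≠ u := (Finset.mem_filter.mp huv.1).2
    have hv : v ≠ u ∧ v ≠ σ u := by
      have := huv.2
      simp only [Finset.mem_sdiff, Finset.mem_insert, Finset.mem_singleton] at this
      tauto
    have hd : ¬ (s(u, v) : Sym2 (Fin n)).IsDiag := by
      rw [Sym2.mk_isDiag_iff]; exact fun h => hv.1 h.symm
    have hmoved : Sym2.map σ s(u, v) ≠ s(u, v) := by
      rw [Sym2.map_pair_eq]
      intro h
      rcases Sym2.eq_iff.mp h with ⟨h1, _⟩ | ⟨h1, _⟩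
      · exact hu h1
      · exact hv.2 h1.symm
    refine Finset.mem_image.mpr ⟨⟨s(u, v), hd⟩, ?_, by rw [← hab]⟩
    rw [hME, Finset.mem_filter]
    refine ⟨Finset.mem_univ _, ?_⟩
    intro h
    exact hmoved (congrArg Subtype.val h)
  have h3 : (ME.image Subtype.val).card = ME.card :=
    Finset.card_image_of_injective _ Subtype.val_injective
  calc (n - 2) * S.card = P.card := by rw [hPcard, mul_comm]
    _ ≤ 2 * (P.image f).card := h1
    _ ≤ 2 * ME.card := by
        rw [← h3]; exact Nat.mul_le_mul_left 2 (Finset.card_le_card h2)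

lemma moved_edges_le {n : ℕ} (σ : Equiv.Perm (Fin n)) :
    (Finset.univ.filter (fun e : GraphEdge n => edgeMap σ e ≠ e)).card ≤
      (Finset.univ.filter (fun u : Fin n => σ u ≠ u)).card * n := by
  classical
  set S := Finset.univ.filter (fun u : Fin n => σ u ≠ u) with hS
  set ME := Finset.univ.filter (fun e : GraphEdge n => edgeMap σ e ≠ e) with hME
  set g : Fin n × Fin n → Sym2 (Fin n) := fun x => s(x.1, x.2) with hg
  have hsub : ME.image Subtype.val ⊆ (S ×ˢ Finset.univ).image g := by
    intro b hb
    obtain ⟨e, heME, heb⟩ := Finset.mem_image.mp hb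
    have hmoved : Sym2.map σ e.1 ≠ e.1 := by
      intro h
      exact (Finset.mem_filter.mp heME).2 (Subtype.ext h)
    obtain ⟨⟨u, v⟩, hrep⟩ := Quot.exists_rep e.1
    have hbe : b = s(u, v) := by rw [← heb, ← hrep]
    have : σ u ≠ u ∨ σ v ≠ v := by
      by_contra hc
      push_neg at hc
      apply hmoved
      rw [← hrep]
      show Sym2.map σ s(u, v) = s(u, v)
      rw [Sym2.map_pair_eq, hc.1, hc.2]
    rcases this with h | h
    · exact Finset.mem_image.mpr ⟨(u, v), Finset.mem_product.mpr
        ⟨Finset.mem_filter.mpr ⟨Finset.mem_univ _, h⟩, Finset.mem_univ _⟩, by rw [hbe]⟩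
    · refine Finset.mem_image.mpr ⟨(v, u), Finset.mem_product.mpr
        ⟨Finset.mem_filter.mpr ⟨Finset.mem_univ _, h⟩, Finset.mem_univ _⟩, ?_⟩
      rw [hbe, hg]
      exact (Sym2.eq_swap)
  calc ME.card = (ME.image Subtype.val).card :=
        (Finset.card_image_of_injective _ Subtype.val_injective).symm
    _ ≤ ((S ×ˢ Finset.univ).image g).card := Finset.card_le_card hsub
    _ ≤ (S ×ˢ (Finset.univ : Finset (Fin n))).card := Finset.card_image_le
    _ = S.card * n := by rw [Finset.card_product, Finset.card_univ, Fintype.card_fin]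

lemma B1_mul_Bpi_apply {n p : ℕ} (π : Fin p → Equiv.Perm (Fin n))
    (x y : Fin p × GraphEdge n) :
    (Bmat (n := n) (p := p) (fun _ => 1) * Bmat π) x y =
      (p : ℝ)⁻¹ * ((p : ℝ)⁻¹ * ∑ k : Fin p,
        if edgeMap (π k) x.2 = edgeMap (π y.1) y.2 then (1:ℝ) else 0) := by
  rw [Matrix.mul_apply, Fintype.sum_prod_type]
  have h1 : ∀ k : Fin p, ∀ f : GraphEdge n,
      Bmat (n := n) (p := p) (fun _ => 1) x (k, f) * Bmat π (k, f) y =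
        (p:ℝ)⁻¹ * (p:ℝ)⁻¹ * ((if x.2 = f then (1:ℝ) else 0) *
          (if edgeMap (π k) f = edgeMap (π y.1) y.2 then (1:ℝ) else 0)) := by
    intro k f
    simp only [Bmat, edgeMap_one]
    ring
  simp_rw [h1]
  have h2 : ∀ k : Fin p,
      ∑ f : GraphEdge n, (p:ℝ)⁻¹ * (p:ℝ)⁻¹ * ((if x.2 = f then (1:ℝ) else 0) *
          (if edgeMap (π k) f = edgeMap (π y.1) y.2 then (1:ℝ) else 0)) =
        (p:ℝ)⁻¹ * (p:ℝ)⁻¹ *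
          (if edgeMap (π k) x.2 = edgeMap (π y.1) y.2 then (1:ℝ) else 0) := by
    intro k
    rw [← Finset.mul_sum]
    congr 1
    simp only [ite_mul, one_mul, zero_mul]
    rw [Finset.sum_ite_eq]
    simp
  simp_rw [h2]
  rw [← Finset.mul_sum]
  ring

lemma innerAbsSum {n p : ℕ} (hp : 1 ≤ p) (π : Fin p → Equiv.Perm (Fin n))
    (j' : Fin p) (e : GraphEdge n) :
    ∑ e' : GraphEdge n,
      |(p : ℝ)⁻¹ * (if e = e' then 1 else 0) -
        (p : ℝ)⁻¹ * ((p : ℝ)⁻¹ * ∑ k : Fin p,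
          if edgeMap (π k) e = edgeMap (π j') e' then (1:ℝ) else 0)| =
      2 * (p : ℝ)⁻¹ * (p : ℝ)⁻¹ * ∑ k : Fin p,
        (if edgeMap (π k) e = edgeMap (π j') e then (0:ℝ) else 1) := by
  classical
  have hp0 : (0:ℝ) < p := by exact_mod_cast Nat.lt_of_lt_of_le Nat.zero_lt_one hp
  set G : GraphEdge n → ℝ := fun g => ∑ k : Fin p,
    if edgeMap (π k) e = g then (1:ℝ) else 0 with hG
  set g₀ : GraphEdge n := edgeMap (π j') e with hg₀
  -- reindex the sum over e' by g = edgeMap (π j') e'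
  have hre : ∀ e' : GraphEdge n, edgeMap (π j') ((edgePerm (π j')).symm e') = e' :=
    fun e' => (edgePerm (π j')).apply_symm_apply e'
  rw [← Equiv.sum_comp (edgePerm (π j')).symm
    (fun e' => |(p : ℝ)⁻¹ * (if e = e' then 1 else 0) -
        (p : ℝ)⁻¹ * ((p : ℝ)⁻¹ * ∑ k : Fin p,
          if edgeMap (π k) e = edgeMap (π j') e' then (1:ℝ) else 0)|)]
  have step1 : ∀ g : GraphEdge n,
      |(p : ℝ)⁻¹ * (if e = (edgePerm (π j')).symm g then 1 else 0) -
        (p : ℝ)⁻¹ * ((p : ℝ)⁻¹ * ∑ k : Fin p,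
          if edgeMap (π k) e = edgeMap (π j') ((edgePerm (π j')).symm g) then (1:ℝ) else 0)| =
      |(p : ℝ)⁻¹ * (if g₀ = g then 1 else 0) - (p : ℝ)⁻¹ * ((p : ℝ)⁻¹ * G g)| := by
    intro g
    rw [hre g]
    congr 2
    by_cases h : g₀ = g
    · rw [if_pos h, if_pos]
      rw [Equiv.eq_symm_apply]
      exact h
    · rw [if_neg h, if_neg]
      intro hc
      exact h (by rw [hg₀, hc]; exact hre g)
  simp_rw [step1]
  -- facts about G
  have hGnonneg : ∀ g, 0 ≤ G g := by
    intro g; apply Finset.sum_nonneg; intro k _; positivity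
  have hGsum : ∑ g : GraphEdge n, G g = p := by
    rw [hG]
    rw [Finset.sum_comm]
    have : ∀ k : Fin p, ∑ g : GraphEdge n,
        (if edgeMap (π k) e = g then (1:ℝ) else 0) = 1 := by
      intro k
      rw [Finset.sum_ite_eq]
      simp
    simp_rw [this]
    simp
  have hGle : G g₀ ≤ p := by
    calc G g₀ ≤ ∑ g : GraphEdge n, G g :=
      Finset.single_le_sum (fun g _ => hGnonneg g) (Finset.mem_univ g₀)
    _ = p := hGsum
  -- split off g₀
  rw [← Finset.sum_erase_add _ _ (Finset.mem_univ g₀)]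
  have hAt : |(p : ℝ)⁻¹ * (if g₀ = g₀ then (1:ℝ) else 0) - (p : ℝ)⁻¹ * ((p : ℝ)⁻¹ * G g₀)|
      = (p:ℝ)⁻¹ * ((p:ℝ)⁻¹ * (p - G g₀)) := by
    rw [if_pos rfl, abs_of_nonneg]
    · field_simp
    · have : (p:ℝ)⁻¹ * ((p:ℝ)⁻¹ * G g₀) ≤ (p:ℝ)⁻¹ * ((p:ℝ)⁻¹ * p) := by
        apply mul_le_mul_of_nonneg_left _ (by positivity)
        apply mul_le_mul_of_nonneg_left hGle (by positivity)
      have h2 : (p:ℝ)⁻¹ * ((p:ℝ)⁻¹ * p) = (p:ℝ)⁻¹ * 1 := by field_simp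
      simp only [mul_one] at h2 ⊢
      rw [h2] at this
      linarith
  have hOff : ∀ g ∈ Finset.univ.erase g₀,
      |(p : ℝ)⁻¹ * (if g₀ = g then (1:ℝ) else 0) - (p : ℝ)⁻¹ * ((p : ℝ)⁻¹ * G g)|
        = (p:ℝ)⁻¹ * ((p:ℝ)⁻¹ * G g) := by
    intro g hg
    rw [if_neg (Finset.ne_of_mem_erase hg).symm]
    rw [mul_zero, zero_sub, abs_neg, abs_of_nonneg (by positivity)]
  rw [Finset.sum_congr rfl hOff, hAt]
  have hsum_erase : ∑ g ∈ Finset.univ.erase g₀, (p:ℝ)⁻¹ * ((p:ℝ)⁻¹ * G g)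
      = (p:ℝ)⁻¹ * ((p:ℝ)⁻¹ * (p - G g₀)) := by
    rw [← Finset.mul_sum]
    congr 1
    rw [← Finset.mul_sum]
    congr 1
    have := Finset.sum_erase_add Finset.univ G (Finset.mem_univ g₀)
    rw [hGsum] at this
    linarith
  rw [hsum_erase]
  have hcompl : ((p:ℝ) - G g₀) = ∑ k : Fin p,
      (if edgeMap (π k) e = g₀ then (0:ℝ) else 1) := by
    have : ∀ k : Fin p, (if edgeMap (π k) e = g₀ then (0:ℝ) else 1)
        = 1 - (if edgeMap (π k) e = g₀ then (1:ℝ) else 0) := by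
      intro k; by_cases h : edgeMap (π k) e = g₀ <;> simp [h]
    simp_rw [this]
    rw [Finset.sum_sub_distrib]
    simp [hG]
  rw [← hcompl]
  ring

lemma l1_formula {n p : ℕ} (hp : 1 ≤ p) (π : Fin p → Equiv.Perm (Fin n)) :
    l1Norm (Bmat (n := n) (p := p) (fun _ => 1) - Bmat (fun _ => 1) * Bmat π) =
      2 * (p:ℝ)⁻¹ * ∑ j' : Fin p, ∑ k : Fin p,
        ((Finset.univ.filter (fun e : GraphEdge n =>
          edgeMap (π k) e ≠ edgeMap (π j') e)).card : ℝ) := by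
  classical
  unfold l1Norm
  rw [Fintype.sum_prod_type]
  have key : ∀ (j : Fin p) (e : GraphEdge n),
      ∑ y : Fin p × GraphEdge n,
        |(Bmat (n := n) (p := p) (fun _ => 1) - Bmat (fun _ => 1) * Bmat π
            : Matrix (Fin p × GraphEdge n) (Fin p × GraphEdge n) ℝ) (j, e) y|
      = ∑ j' : Fin p, 2 * (p:ℝ)⁻¹ * (p:ℝ)⁻¹ * ∑ k : Fin p,
          (if edgeMap (π k) e = edgeMap (π j') e then (0:ℝ) else 1) := by
    intro j e
    rw [Fintype.sum_prod_type]
    apply Finset.sum_congr rfl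
    intro j' _
    have hentry : ∀ e' : GraphEdge n,
        (Bmat (n := n) (p := p) (fun _ => 1) - Bmat (fun _ => 1) * Bmat π
            : Matrix (Fin p × GraphEdge n) (Fin p × GraphEdge n) ℝ) (j, e) (j', e')
        = (p : ℝ)⁻¹ * (if e = e' then 1 else 0) -
            (p : ℝ)⁻¹ * ((p : ℝ)⁻¹ * ∑ k : Fin p,
              if edgeMap (π k) e = edgeMap (π j') e' then (1:ℝ) else 0) := by
      intro e'
      rw [Matrix.sub_apply, B1_mul_Bpi_apply]
      simp only [Bmat, edgeMap_one]
    simp_rw [hentry]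
    exact innerAbsSum hp π j' e
  simp_rw [key]
  have swap :
      (∑ e : GraphEdge n, ∑ j' : Fin p, 2 * (p:ℝ)⁻¹ * (p:ℝ)⁻¹ * ∑ k : Fin p,
          (if edgeMap (π k) e = edgeMap (π j') e then (0:ℝ) else 1))
      = 2 * (p:ℝ)⁻¹ * (p:ℝ)⁻¹ * ∑ j' : Fin p, ∑ k : Fin p,
          ((Finset.univ.filter (fun e : GraphEdge n =>
            edgeMap (π k) e ≠ edgeMap (π j') e)).card : ℝ) := by
    simp_rw [Finset.mul_sum]
    rw [Finset.sum_comm]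
    apply Finset.sum_congr rfl
    intro j' _
    rw [Finset.sum_comm]
    apply Finset.sum_congr rfl
    intro k _
    rw [Finset.card_filter]
    push_cast
    rw [Finset.mul_sum]
    apply Finset.sum_congr rfl
    intro e _
    by_cases h : edgeMap (π k) e = edgeMap (π j') e <;> simp [h]
  simp_rw [swap]
  rw [Finset.sum_const, Finset.card_univ, Fintype.card_fin, nsmul_eq_mul]
  have hp0 : (p:ℝ) ≠ 0 := by positivity
  field_simp

lemma nat_core {n p : ℕ} (π : Fin p → Equiv.Perm (Fin n))
    (hnorm : ∀ ψ : Equiv.Perm (Fin n), mismatches π ≤ mismatches (fun j => ψ * π j)) :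
    (n - 2) * (p * mismatches π) ≤ 2 * ∑ j' : Fin p, ∑ k : Fin p,
      (Finset.univ.filter (fun e : GraphEdge n =>
        edgeMap (π k) e ≠ edgeMap (π j') e)).card := by
  classical
  set dH : Fin p → Fin p → ℕ := fun j k =>
    (Finset.univ.filter (fun u : Fin n => π j u ≠ π k u)).card with hdH
  have hfilter : ∀ j k : Fin p,
      (Finset.univ.filter (fun u : Fin n => ((π k)⁻¹ * π j) u ≠ u)) =
      (Finset.univ.filter (fun u : Fin n => π j u ≠ π k u)) := by
    intro j k
    apply Finset.filter_congr
    intro u _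
    rw [Equiv.Perm.mul_apply]
    constructor
    · intro h hc; exact h (by rw [hc]; exact (π k).symm_apply_apply u)
    · intro h hc
      have h2 := congrArg (π k) hc
      rw [show (π k) ((π k)⁻¹ (π j u)) = π j u from (π k).apply_symm_apply _] at h2
      exact h h2
  have hnorm' : ∀ k : Fin p, p * mismatches π ≤ p * ∑ j : Fin p, dH j k → True := fun _ _ => trivial
  have h1 : ∀ k : Fin p, mismatches π ≤ ∑ j : Fin p, dH j k := by
    intro k
    calc mismatches π ≤ mismatches (fun j => (π k)⁻¹ * π j) := hnorm _
      _ = ∑ j : Fin p, dH j k := by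
          unfold mismatches
          apply Finset.sum_congr rfl
          intro j _
          rw [hfilter j k]
  have h2 : p * mismatches π ≤ ∑ k : Fin p, ∑ j : Fin p, dH j k := by
    calc p * mismatches π = ∑ _k : Fin p, mismatches π := by
          rw [Finset.sum_const, Finset.card_univ, Fintype.card_fin, smul_eq_mul]
      _ ≤ ∑ k : Fin p, ∑ j : Fin p, dH j k := Finset.sum_le_sum (fun k _ => h1 k)
  have h3 : ∀ j k : Fin p, (n - 2) * dH j k ≤ 2 *
      (Finset.univ.filter (fun e : GraphEdge n =>
        edgeMap (π k) e ≠ edgeMap (π j) e)).card := by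
    intro j k
    have := edge_vertex_count ((π k)⁻¹ * π j)
    rw [hfilter j k] at this
    have hfe : (Finset.univ.filter (fun e : GraphEdge n => edgeMap ((π k)⁻¹ * π j) e ≠ e)) =
        (Finset.univ.filter (fun e : GraphEdge n =>
          edgeMap (π k) e ≠ edgeMap (π j) e)) := by
      apply Finset.filter_congr
      intro e _
      rw [edgeMap_mul]
      constructor
      · intro h hc
        apply h
        show edgeMap (π k)⁻¹ (edgeMap (π j) e) = e
        rw [← hc]
        exact edgeMap_inv_cancel' (π k) e
      · intro h hc
        apply h
        have h2 : edgeMap (π k) (edgeMap (π k)⁻¹ (edgeMap (π j) e)) = edgeMap (π k) e := by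
          rw [hc]
        rw [edgeMap_inv_cancel (π k) (edgeMap (π j) e)] at h2
        exact h2.symm
    rw [hfe] at this
    exact this
  calc (n - 2) * (p * mismatches π) ≤ (n - 2) * ∑ k : Fin p, ∑ j : Fin p, dH j k :=
        Nat.mul_le_mul_left _ h2
    _ = ∑ k : Fin p, ∑ j : Fin p, (n - 2) * dH j k := by rw [Finset.mul_sum]; simp [Finset.mul_sum]
    _ ≤ ∑ k : Fin p, ∑ j : Fin p, 2 * (Finset.univ.filter (fun e : GraphEdge n =>
          edgeMap (π k) e ≠ edgeMap (π j) e)).card :=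
        Finset.sum_le_sum (fun k _ => Finset.sum_le_sum (fun j _ => h3 j k))
    _ = 2 * ∑ k : Fin p, ∑ j : Fin p, (Finset.univ.filter (fun e : GraphEdge n =>
          edgeMap (π k) e ≠ edgeMap (π j) e)).card := by
        rw [Finset.mul_sum]; simp [Finset.mul_sum]
    _ = 2 * ∑ j' : Fin p, ∑ k : Fin p, (Finset.univ.filter (fun e : GraphEdge n =>
          edgeMap (π k) e ≠ edgeMap (π j') e)).card := by
        congr 1
        rw [Finset.sum_comm]

lemma NZ_card_le {n p : ℕ} (hp : 1 ≤ p) (π : Fin p → Equiv.Perm (Fin n))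
    [DecidablePred (fun q : (Fin p × GraphEdge n) × (Fin p × GraphEdge n) =>
      Bmat π q.1 q.2 ≠ Bmat (n := n) (p := p) (fun _ => 1) q.1 q.2)] :
    (Finset.univ.filter (fun q : (Fin p × GraphEdge n) × (Fin p × GraphEdge n) =>
      Bmat π q.1 q.2 ≠ Bmat (n := n) (p := p) (fun _ => 1) q.1 q.2)).card ≤
      4 * p * (n * mismatches π) := by
  classical
  set S : Finset (Fin p × GraphEdge n) :=
    Finset.univ.filter (fun x : Fin p × GraphEdge n => edgeMap (π x.1) x.2 ≠ x.2) with hSdef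
  have hScard : S.card ≤ mismatches π * n := by
    have h1 : S.card = ∑ j : Fin p,
        (Finset.univ.filter (fun e : GraphEdge n => edgeMap (π j) e ≠ e)).card := by
      rw [hSdef, Finset.card_filter, Fintype.sum_prod_type]
      apply Finset.sum_congr rfl
      intro j _
      rw [Finset.card_filter]
    rw [h1]
    unfold mismatches
    rw [Finset.sum_mul]
    exact Finset.sum_le_sum (fun j _ => moved_edges_le (π j))
  set h1f : ((Fin p × GraphEdge n) × Fin p) × Bool →
      (Fin p × GraphEdge n) × (Fin p × GraphEdge n) :=
    fun z => (z.1.1, (z.1.2, if z.2 then z.1.1.2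
      else edgeMap (π z.1.2)⁻¹ (edgeMap (π z.1.1.1) z.1.1.2))) with hh1f
  set h2f : ((Fin p × GraphEdge n) × Fin p) × Bool →
      (Fin p × GraphEdge n) × (Fin p × GraphEdge n) :=
    fun z => ((z.1.2, if z.2 then z.1.1.2
      else edgeMap (π z.1.2)⁻¹ (edgeMap (π z.1.1.1) z.1.1.2)), z.1.1) with hh2f
  set T1 := ((S ×ˢ (Finset.univ : Finset (Fin p))) ×ˢ (Finset.univ : Finset Bool)).image h1f
    with hT1
  set T2 := ((S ×ˢ (Finset.univ : Finset (Fin p))) ×ˢ (Finset.univ : Finset Bool)).image h2f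
    with hT2
  have hsubNZ : (Finset.univ.filter (fun q : (Fin p × GraphEdge n) × (Fin p × GraphEdge n) =>
      Bmat π q.1 q.2 ≠ Bmat (n := n) (p := p) (fun _ => 1) q.1 q.2)) ⊆ T1 ∪ T2 := by
    intro q hq
    obtain ⟨x, y⟩ := q
    obtain ⟨x1, x2⟩ := x
    obtain ⟨y1, y2⟩ := y
    have hne := (Finset.mem_filter.mp hq).2
    have hdiff : ¬ ((edgeMap (π x1) x2 = edgeMap (π y1) y2) ↔ (x2 = y2)) := by
      intro hiff
      apply hne
      show Bmat π (x1, x2) (y1, y2) = Bmat (fun _ => 1) (x1, x2) (y1, y2)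
      simp only [Bmat, edgeMap_one]
      by_cases h : x2 = y2
      · rw [if_pos (hiff.mpr h), if_pos h]
      · rw [if_neg (fun hc => h (hiff.mp hc)), if_neg h]
    have hmoved : edgeMap (π x1) x2 ≠ x2 ∨ edgeMap (π y1) y2 ≠ y2 := by
      by_contra hc
      push_neg at hc
      apply hdiff
      rw [hc.1, hc.2]
    rcases hmoved with hm | hm
    · apply Finset.mem_union_left
      rw [hT1]
      apply Finset.mem_image.mpr
      have hmemS : ((x1, x2) : Fin p × GraphEdge n) ∈ S :=
        Finset.mem_filter.mpr ⟨Finset.mem_univ _, hm⟩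
      have hcase : y2 = x2 ∨ y2 = edgeMap (π y1)⁻¹ (edgeMap (π x1) x2) := by
        by_cases h : x2 = y2
        · exact Or.inl h.symm
        · have hEq : edgeMap (π x1) x2 = edgeMap (π y1) y2 := by
            by_contra hcne
            exact hdiff ⟨fun ha => absurd ha hcne, fun hb => absurd hb h⟩
          right
          rw [hEq, edgeMap_inv_cancel']
      rcases hcase with hc | hc
      · exact ⟨(((x1, x2), y1), true), Finset.mem_product.mpr ⟨Finset.mem_product.mpr
          ⟨hmemS, Finset.mem_univ _⟩, Finset.mem_univ _⟩, by simp [hh1f, hc]⟩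
      · exact ⟨(((x1, x2), y1), false), Finset.mem_product.mpr ⟨Finset.mem_product.mpr
          ⟨hmemS, Finset.mem_univ _⟩, Finset.mem_univ _⟩, by simp [hh1f, hc]⟩
    · apply Finset.mem_union_right
      rw [hT2]
      apply Finset.mem_image.mpr
      have hmemS : ((y1, y2) : Fin p × GraphEdge n) ∈ S :=
        Finset.mem_filter.mpr ⟨Finset.mem_univ _, hm⟩
      have hcase : x2 = y2 ∨ x2 = edgeMap (π x1)⁻¹ (edgeMap (π y1) y2) := by
        by_cases h : x2 = y2
        · exact Or.inl h
        · have hEq : edgeMap (π x1) x2 = edgeMap (π y1) y2 := by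
            by_contra hcne
            exact hdiff ⟨fun ha => absurd ha hcne, fun hb => absurd hb h⟩
          right
          rw [← hEq, edgeMap_inv_cancel']
      rcases hcase with hc | hc
      · exact ⟨(((y1, y2), x1), true), Finset.mem_product.mpr ⟨Finset.mem_product.mpr
          ⟨hmemS, Finset.mem_univ _⟩, Finset.mem_univ _⟩, by simp [hh2f, hc]⟩
      · exact ⟨(((y1, y2), x1), false), Finset.mem_product.mpr ⟨Finset.mem_product.mpr
          ⟨hmemS, Finset.mem_univ _⟩, Finset.mem_univ _⟩, by simp [hh2f, hc]⟩
  have hTcard : ∀ f : ((Fin p × GraphEdge n) × Fin p) × Bool →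
      (Fin p × GraphEdge n) × (Fin p × GraphEdge n),
      (((S ×ˢ (Finset.univ : Finset (Fin p))) ×ˢ (Finset.univ : Finset Bool)).image f).card
        ≤ S.card * p * 2 := by
    intro f
    calc (((S ×ˢ Finset.univ) ×ˢ Finset.univ).image f).card
        ≤ ((S ×ˢ (Finset.univ : Finset (Fin p))) ×ˢ (Finset.univ : Finset Bool)).card :=
          Finset.card_image_le
      _ = S.card * p * 2 := by
          rw [Finset.card_product, Finset.card_product, Finset.card_univ, Finset.card_univ,
            Fintype.card_fin, Fintype.card_bool]
  calc (Finset.univ.filter (fun q : (Fin p × GraphEdge n) × (Fin p × GraphEdge n) =>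
        Bmat π q.1 q.2 ≠ Bmat (n := n) (p := p) (fun _ => 1) q.1 q.2)).card
      ≤ (T1 ∪ T2).card := Finset.card_le_card hsubNZ
    _ ≤ T1.card + T2.card := Finset.card_union_le _ _
    _ ≤ S.card * p * 2 + S.card * p * 2 := Nat.add_le_add (hTcard h1f) (hTcard h2f)
    _ ≤ (mismatches π * n) * p * 2 + (mismatches π * n) * p * 2 := by
        nlinarith [hScard]
    _ = 4 * p * (n * mismatches π) := by ring

theorem nonzero_entries_and_norms_of_B_minus_Bstar :
    ∃ C C' : ℝ, 0 < C ∧ 0 < C' ∧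
      ∀ (n p : ℕ), 2 ≤ n → 1 ≤ p →
        ∀ π : Fin p → Equiv.Perm (Fin n),
          (∀ ψ : Equiv.Perm (Fin n), mismatches π ≤ mismatches (fun j => ψ * π j)) →
          (Set.ncard {q : (Fin p × GraphEdge n) × (Fin p × GraphEdge n) |
              Bmat π q.1 q.2 ≠ Bmat (n := n) (p := p) (fun _ => 1) q.1 q.2} : ℝ) ≤
            C * p * l1Norm (Bmat (n := n) (p := p) (fun _ => 1) -
              Bmat (fun _ => 1) * Bmat π) ∧
          frobNorm (Bmat π - Bmat (n := n) (p := p) (fun _ => 1)) ≤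
            C' * Real.sqrt (l1Norm (Bmat (n := n) (p := p) (fun _ => 1) -
              Bmat (fun _ => 1) * Bmat π) / p) ∧
          opNorm (Bmat π - Bmat (n := n) (p := p) (fun _ => 1)) ≤ 2 := by
  classical
  refine ⟨12, 4, by norm_num, by norm_num, ?_⟩
  intro n p hn hp π hnorm
  set L := l1Norm (Bmat (n := n) (p := p) (fun _ => 1) -
    Bmat (fun _ => 1) * Bmat π) with hLdef
  have hp0 : (0:ℝ) < p := by exact_mod_cast Nat.lt_of_lt_of_le Nat.zero_lt_one hp
  have hL0 : 0 ≤ L := by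
    rw [hLdef]
    unfold l1Norm
    apply Finset.sum_nonneg
    intro i _
    apply Finset.sum_nonneg
    intro j _
    exact abs_nonneg _
  set NZ := Finset.univ.filter (fun q : (Fin p × GraphEdge n) × (Fin p × GraphEdge n) =>
    Bmat π q.1 q.2 ≠ Bmat (n := n) (p := p) (fun _ => 1) q.1 q.2) with hNZ
  have hset : {q : (Fin p × GraphEdge n) × (Fin p × GraphEdge n) |
      Bmat π q.1 q.2 ≠ Bmat (n := n) (p := p) (fun _ => 1) q.1 q.2} = ↑NZ := by
    ext q
    simp [hNZ]
  have hcard : ((NZ.card : ℝ)) ≤ 12 * p * L := by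
    by_cases hn3 : 3 ≤ n
    · -- main case
      have hnat := NZ_card_le hp π
      have hreal : ((NZ.card : ℝ)) ≤ 4 * p * (n * mismatches π) := by
        rw [hNZ]
        exact_mod_cast hnat
      have hlow : ((n:ℝ) - 2) * (mismatches π : ℝ) ≤ L := by
        have hf := l1_formula hp π
        have hc := nat_core π hnorm
        set Snat : ℕ := ∑ j' : Fin p, ∑ k : Fin p,
          (Finset.univ.filter (fun e : GraphEdge n =>
            edgeMap (π k) e ≠ edgeMap (π j') e)).card with hSnat
        have hfr : L = 2 * (p:ℝ)⁻¹ * (Snat : ℝ) := by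
          rw [hLdef, hf, hSnat]
          push_cast
          rfl
        have hcr : ((n:ℝ) - 2) * ((p:ℝ) * (mismatches π : ℝ)) ≤ 2 * (Snat : ℝ) := by
          have : (((n - 2) * (p * mismatches π) : ℕ) : ℝ) ≤ ((2 * Snat : ℕ) : ℝ) := by
            exact_mod_cast hc
          push_cast at this
          rwa [Nat.cast_sub hn] at this
        rw [hfr]
        have h3 := mul_le_mul_of_nonneg_left hcr (le_of_lt (inv_pos.mpr hp0))
        have h4 : (p:ℝ)⁻¹ * (((n:ℝ) - 2) * ((p:ℝ) * (mismatches π : ℝ)))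
            = ((n:ℝ) - 2) * (mismatches π : ℝ) := by
          field_simp
        rw [h4] at h3
        calc ((n:ℝ) - 2) * (mismatches π : ℝ) ≤ (p:ℝ)⁻¹ * (2 * (Snat:ℝ)) := h3
          _ = 2 * (p:ℝ)⁻¹ * (Snat:ℝ) := by ring
      have hm3 : ((n:ℝ)) * (mismatches π : ℝ) ≤ 3 * L := by
        have hn3' : (n:ℝ) ≤ 3 * ((n:ℝ) - 2) := by
          have : (3:ℝ) ≤ n := by exact_mod_cast hn3
          linarith
        have hmm : (0:ℝ) ≤ (mismatches π : ℝ) := Nat.cast_nonneg _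
        nlinarith
      calc ((NZ.card : ℝ)) ≤ 4 * p * ((n:ℝ) * (mismatches π : ℝ)) := hreal
        _ ≤ 4 * p * (3 * L) := by
            apply mul_le_mul_of_nonneg_left hm3
            positivity
        _ = 12 * p * L := by ring
    · -- n = 2
      have hn2 : n = 2 := by omega
      subst hn2
      have hsub2 : ∀ e e' : GraphEdge 2, e = e' := by decide
      have hB : Bmat π = Bmat (n := 2) (p := p) (fun _ => 1) := by
        funext x y
        show (p : ℝ)⁻¹ * _ = (p : ℝ)⁻¹ * _
        rw [if_pos (hsub2 _ _), if_pos (hsub2 _ _)]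
      have : NZ = ∅ := by
        rw [hNZ]
        apply Finset.filter_false_of_mem
        intro q _
        rw [hB]
        simp
      rw [this]
      simp only [Finset.card_empty, Nat.cast_zero]
      positivity
  refine ⟨?_, ?_, opNorm_sub_le hp π (fun _ => 1)⟩
  · rw [hset, Set.ncard_coe_finset]
    exact hcard
  · -- Frobenius bound
    have hentry : ∀ x y : Fin p × GraphEdge n,
        |Bmat π x y - Bmat (n := n) (p := p) (fun _ => 1) x y| ≤ (p:ℝ)⁻¹ := by
      intro x y
      show |(p : ℝ)⁻¹ * _ - (p : ℝ)⁻¹ * _| ≤ (p:ℝ)⁻¹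
      rw [← mul_sub, abs_mul, abs_of_nonneg (by positivity : (0:ℝ) ≤ (p:ℝ)⁻¹)]
      have : |(if edgeMap (π x.1) x.2 = edgeMap (π y.1) y.2 then (1:ℝ) else 0) -
          (if edgeMap ((fun _ : Fin p => (1 : Equiv.Perm (Fin n))) y.1) x.2 =
            edgeMap ((fun _ : Fin p => (1 : Equiv.Perm (Fin n))) y.1) y.2 then (1:ℝ) else 0)|
          ≤ 1 := by
        split <;> split <;> norm_num
      calc (p:ℝ)⁻¹ * |_| ≤ (p:ℝ)⁻¹ * 1 := by
            apply mul_le_mul_of_nonneg_left _ (by positivity)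
            exact this
        _ = (p:ℝ)⁻¹ := mul_one _
    have hsq : (∑ x : Fin p × GraphEdge n, ∑ y : Fin p × GraphEdge n,
        ((Bmat π - Bmat (n := n) (p := p) (fun _ => 1)
          : Matrix (Fin p × GraphEdge n) (Fin p × GraphEdge n) ℝ) x y) ^ 2)
        ≤ (NZ.card : ℝ) * ((p:ℝ)⁻¹)^2 := by
      have hNZc : (NZ.card : ℝ) * ((p:ℝ)⁻¹)^2 = ∑ x : Fin p × GraphEdge n,
          ∑ y : Fin p × GraphEdge n, (if Bmat π x y ≠ Bmat (n := n) (p := p) (fun _ => 1) x y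
            then ((p:ℝ)⁻¹)^2 else 0) := by
        rw [hNZ, Finset.card_filter]
        push_cast
        rw [Finset.sum_mul, Fintype.sum_prod_type]
        apply Finset.sum_congr rfl
        intro x _
        apply Finset.sum_congr rfl
        intro y _
        by_cases h : Bmat π x y = Bmat (n := n) (p := p) (fun _ => 1) x y <;> simp [h]
      rw [hNZc]
      apply Finset.sum_le_sum
      intro x _
      apply Finset.sum_le_sum
      intro y _
      rw [Matrix.sub_apply]
      by_cases h : Bmat π x y = Bmat (n := n) (p := p) (fun _ => 1) x y
      · rw [if_neg (by simpa using h), h]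
        simp
      · rw [if_pos h]
        calc (Bmat π x y - Bmat (n := n) (p := p) (fun _ => 1) x y)^2
            = |Bmat π x y - Bmat (n := n) (p := p) (fun _ => 1) x y|^2 := (sq_abs _).symm
          _ ≤ ((p:ℝ)⁻¹)^2 := by
              apply pow_le_pow_left₀ (abs_nonneg _) (hentry x y)
    unfold frobNorm
    have hb : (∑ x : Fin p × GraphEdge n, ∑ y : Fin p × GraphEdge n,
        ((Bmat π - Bmat (n := n) (p := p) (fun _ => 1)
          : Matrix (Fin p × GraphEdge n) (Fin p × GraphEdge n) ℝ) x y) ^ 2)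
        ≤ 12 * (L / p) := by
      calc _ ≤ (NZ.card : ℝ) * ((p:ℝ)⁻¹)^2 := hsq
        _ ≤ (12 * p * L) * ((p:ℝ)⁻¹)^2 := by
            apply mul_le_mul_of_nonneg_right hcard (by positivity)
        _ = 12 * (L / p) := by field_simp
    calc Real.sqrt _ ≤ Real.sqrt (12 * (L / p)) := Real.sqrt_le_sqrt hb
      _ = Real.sqrt 12 * Real.sqrt (L / p) := Real.sqrt_mul (by norm_num) _
      _ ≤ 4 * Real.sqrt (L / p) := by
          apply mul_le_mul_of_nonneg_right _ (Real.sqrt_nonneg _)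
          rw [show (4:ℝ) = Real.sqrt 16 by
            rw [show (16:ℝ) = 4^2 by norm_num, Real.sqrt_sq (by norm_num)]]
          exact Real.sqrt_le_sqrt (by norm_num)
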